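/- Let P and Q be nonzero integers with D = P^2 - 4Q ≠ 0, let U = U(P,Q) be nondegenerate, and let p be an odd prime with p ∣ D and p ∤ gcd(P,Q). Then for every integer k ≥ 1, with k ≥ 2 required in the case p = 3, one has M^U_{p^k} ≡ p (mod p^{k+1}); that is, there exists an integer t such that M^U_{p^k} = p + p^{k+1}·t. -/

import Mathlib

/-- Lucas sequence of the first kind: `U 0 = 0`, `U 1 = 1`,
`U (n+2) = P * U (n+1) - Q * U n`. -/
def lucasU (P Q : ℤ) : ℕ → ℤ
  | 0 => 0
  | 1 => 1
  | n + 2 => P * lucasU P Q (n + 1) - Q * lucasU P Q n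

/-- Möbius dual of the Lucas sequence of the first kind:
`M^U_n = ∏_{d ∣ n} U_d ^ μ(n/d)`, as a rational number. -/
def mobiusDualU (P Q : ℤ) (n : ℕ) : ℚ :=
  ∏ d ∈ n.divisors, (lucasU P Q d : ℚ) ^ (ArithmeticFunction.moebius (n / d))

lemma lucasU_add_two (P Q : ℤ) (n : ℕ) :
    lucasU P Q (n + 2) = P * lucasU P Q (n + 1) - Q * lucasU P Q n := rfl

lemma lucasU_add (P Q : ℤ) (m : ℕ) : ∀ n : ℕ, lucasU P Q (m + n + 1) =
    lucasU P Q (m + 1) * lucasU P Q (n + 1) - Q * lucasU P Q m * lucasU P Q n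
  | 0 => by simp [lucasU]
  | 1 => by
      rw [show m + 1 + 1 = m + 2 from rfl, lucasU_add_two]
      simp [lucasU]; ring
  | n + 2 => by
      have h1 := lucasU_add P Q m n
      have h2 := lucasU_add P Q m (n + 1)
      rw [show m + (n + 2) + 1 = (m + n + 1) + 2 from by omega, lucasU_add_two,
        show m + n + 1 + 1 = m + (n + 1) + 1 from by omega, h2, h1,
        show n + 2 + 1 = (n + 1) + 2 from rfl, lucasU_add_two P Q (n + 1),
        lucasU_add_two P Q n]
      ring

lemma lucasU_cassini (P Q : ℤ) : ∀ m : ℕ,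
    lucasU P Q (m + 2) * lucasU P Q m - lucasU P Q (m + 1) ^ 2 = -Q ^ m
  | 0 => by simp [lucasU]
  | m + 1 => by
      have h := lucasU_cassini P Q m
      rw [show m + 1 + 2 = (m + 1) + 2 from rfl, lucasU_add_two P Q (m + 1),
        lucasU_add_two P Q m] at *
      linear_combination Q * h

def lucasV (P Q : ℤ) (n : ℕ) : ℤ := 2 * lucasU P Q (n + 1) - P * lucasU P Q n

lemma lucasV_sq (P Q : ℤ) (n : ℕ) :
    lucasV P Q n ^ 2 - (P ^ 2 - 4 * Q) * lucasU P Q n ^ 2 = 4 * Q ^ n := by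
  have h := lucasU_cassini P Q n
  rw [lucasU_add_two P Q n] at h
  unfold lucasV
  linear_combination (-4) * h

lemma lucasU_mul (P Q : ℤ) (m : ℕ) : ∀ i : ℕ,
    lucasU P Q ((m + 1) * i) =
      lucasU P Q (m + 1) * lucasU (lucasV P Q (m + 1)) (Q ^ (m + 1)) i ∧
    lucasU P Q ((m + 1) * i + 1) =
      lucasU (lucasV P Q (m + 1)) (Q ^ (m + 1)) (i + 1)
        + Q * lucasU P Q m * lucasU (lucasV P Q (m + 1)) (Q ^ (m + 1)) i
  | 0 => by simp [lucasU]
  | i + 1 => by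
      obtain ⟨hA, hB⟩ := lucasU_mul P Q m i
      have hcas := lucasU_cassini P Q m
      have hrec : lucasU P Q (m + 2) = P * lucasU P Q (m + 1) - Q * lucasU P Q m :=
        lucasU_add_two P Q m
      constructor
      · have e : (m + 1) * (i + 1) = (m + 1) * i + m + 1 := by ring
        rw [e, lucasU_add P Q ((m + 1) * i) m, hA, hB]
        ring
      · have hV : lucasV P Q (m + 1) = lucasU P Q (m + 2) - Q * lucasU P Q m := by
          unfold lucasV
          rw [show m + 1 + 1 = m + 2 from rfl, hrec]; ring
        have e : (m + 1) * (i + 1) + 1 = (m + 1) * i + (m + 1) + 1 := by ring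
        rw [e, lucasU_add P Q ((m + 1) * i) (m + 1), hA, hB,
          show i + 1 + 1 = i + 2 from rfl,
          lucasU_add_two (lucasV P Q (m + 1)) (Q ^ (m + 1)) i,
          show m + 1 + 1 = m + 2 from rfl]
        linear_combination (Q * lucasU (lucasV P Q (m + 1)) (Q ^ (m + 1)) i) * hcas
          - (lucasU (lucasV P Q (m + 1)) (Q ^ (m + 1)) (i + 1)) * hV

lemma two_pow_mul_lucasU (P Q : ℤ) : ∀ n : ℕ,
    (P ^ 2 - 4 * Q) ∣ 2 ^ n * lucasU P Q (n + 1) - ((n : ℤ) + 1) * P ^ n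
  | 0 => by simp [lucasU]
  | 1 => by
      rw [show (1:ℕ) + 1 = 2 from rfl, lucasU_add_two]
      simp [lucasU]
  | n + 2 => by
      obtain ⟨a, ha⟩ := two_pow_mul_lucasU P Q n
      obtain ⟨b, hb⟩ := two_pow_mul_lucasU P Q (n + 1)
      refine ⟨2 * P * b - 4 * Q * a + ((n : ℤ) + 1) * P ^ n, ?_⟩
      rw [show n + 2 + 1 = (n + 1) + 2 from rfl, lucasU_add_two P Q (n + 1)]
      push_cast at *
      linear_combination (2 * P) * hb + (-4 * Q) * ha

lemma choose_id (n : ℕ) :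
    (n + 7).choose 3 + (n + 5).choose 3 = 2 * ((n + 6).choose 3) + (n + 5) := by
  have h1 : (n + 7).choose 3 = (n + 6).choose 2 + (n + 6).choose 3 :=
    Nat.choose_succ_succ (n + 6) 2
  have h2 : (n + 6).choose 3 = (n + 5).choose 2 + (n + 5).choose 3 :=
    Nat.choose_succ_succ (n + 5) 2
  have h3 : (n + 6).choose 2 = (n + 5).choose 1 + (n + 5).choose 2 :=
    Nat.choose_succ_succ (n + 5) 1
  have h4 : (n + 5).choose 1 = n + 5 := Nat.choose_one_right _
  omega

lemma closed5 (P Q : ℤ) : ∀ n : ℕ, ∃ f : ℤ,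
    2 ^ (n + 4) * lucasU P Q (n + 5) =
      ((n : ℤ) + 5) * P ^ (n + 4)
        + ((n + 5).choose 3 : ℤ) * P ^ (n + 2) * (P ^ 2 - 4 * Q)
        + (P ^ 2 - 4 * Q) ^ 2 * f
  | 0 => ⟨1, by norm_num [lucasU, Nat.choose]; ring⟩
  | 1 => ⟨6 * P, by norm_num [lucasU, Nat.choose]; ring⟩
  | n + 2 => by
      obtain ⟨a, ha⟩ := closed5 P Q n
      obtain ⟨b, hb⟩ := closed5 P Q (n + 1)
      refine ⟨((n + 5).choose 3 : ℤ) * P ^ (n + 2) + 2 * P * b - P ^ 2 * a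
        + (P ^ 2 - 4 * Q) * a, ?_⟩
      have hch' : ((n + 7).choose 3 : ℤ) + ((n + 5).choose 3 : ℤ)
          = 2 * ((n + 6).choose 3 : ℤ) + ((n : ℤ) + 5) := by exact_mod_cast choose_id n
      rw [show n + 2 + 5 = n + 5 + 2 from rfl, lucasU_add_two P Q (n + 5)]
      simp only [show n + 5 + 2 = n + 7 from by omega, show n + 1 + 5 = n + 6 from by omega,
        show n + 5 + 1 = n + 6 from by omega, show n + 2 + 5 = n + 7 from by omega] at hb ⊢
      push_cast at ha hb ⊢
      linear_combination (2 * P) * hb + (-(P ^ 2) + (P ^ 2 - 4 * Q)) * ha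
        - (P ^ (n + 4) * (P ^ 2 - 4 * Q)) * hch'

lemma prime_dvd_lucasU (P Q : ℤ) (p : ℕ) (hp : p.Prime) (hp2 : p ≠ 2)
    (h : (p : ℤ) ∣ P ^ 2 - 4 * Q) : (p : ℤ) ∣ lucasU P Q p := by
  obtain ⟨s, hs⟩ : ∃ s, p = s + 1 := ⟨p - 1, by have := hp.pos; omega⟩
  have h2 := two_pow_mul_lucasU P Q s
  have hcast : ((s : ℤ) + 1) = (p : ℤ) := by rw [hs]; push_cast; ring
  have hpd : (p : ℤ) ∣ 2 ^ s * lucasU P Q p := by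
    have hd : (p : ℤ) ∣ 2 ^ s * lucasU P Q (s + 1) - ((s : ℤ) + 1) * P ^ s :=
      dvd_trans h h2
    have hd2 : (p : ℤ) ∣ ((s : ℤ) + 1) * P ^ s := by
      rw [hcast]; exact Dvd.intro (P ^ s) rfl
    have h3 : (p : ℤ) ∣ 2 ^ s * lucasU P Q (s + 1) := by simpa using dvd_add hd hd2
    rw [← hs] at h3
    exact h3
  have hprime : Prime ((p : ℕ) : ℤ) := Nat.prime_iff_prime_int.mp hp
  rcases hprime.dvd_mul.mp hpd with hl | hr
  · exfalso
    have : ((p : ℕ) : ℤ) ∣ ((2 : ℕ) : ℤ) := by exact_mod_cast hprime.dvd_of_dvd_pow hl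
    have h2' : p ∣ 2 := by exact_mod_cast this
    exact hp2 ((Nat.prime_dvd_prime_iff_eq hp Nat.prime_two).mp h2')
  · exact hr

lemma pow_dvd_lucasU (P Q : ℤ) (p : ℕ) (hp : p.Prime) (hp2 : p ≠ 2)
    (h : (p : ℤ) ∣ P ^ 2 - 4 * Q) : ∀ j : ℕ, ((p : ℤ)) ^ j ∣ lucasU P Q (p ^ j)
  | 0 => by simp [lucasU]
  | j + 1 => by
    obtain ⟨m, hm⟩ : ∃ m, p ^ j = m + 1 :=
      ⟨p ^ j - 1, by have := pow_pos hp.pos j; omega⟩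
    have hmul := (lucasU_mul P Q m p).1
    rw [← hm] at hmul
    have hDnew : (p : ℤ) ∣ (lucasV P Q (p ^ j)) ^ 2 - 4 * (Q ^ (p ^ j)) := by
      have hv := lucasV_sq P Q (p ^ j)
      have : (lucasV P Q (p ^ j)) ^ 2 - 4 * (Q ^ (p ^ j))
          = (P ^ 2 - 4 * Q) * lucasU P Q (p ^ j) ^ 2 := by linear_combination hv
      rw [this]
      exact Dvd.dvd.mul_right h _
    rw [show p ^ (j + 1) = p ^ j * p from pow_succ p j, hmul, pow_succ]
    exact mul_dvd_mul (pow_dvd_lucasU P Q p hp hp2 h j)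
      (prime_dvd_lucasU _ _ p hp hp2 hDnew)

lemma qr_pow (p : ℕ) (hp : p.Prime) (hp2 : p ≠ 2) (P Q : ℤ)
    (hpP : ¬ (p : ℤ) ∣ P) (hpQ : ¬ (p : ℤ) ∣ Q) (hsq : (p : ℤ) ∣ P ^ 2 - 4 * Q)
    (K M : ℕ) (hM : p = 2 * M + 1) :
    (p : ℤ) ^ (K + 1) ∣ Q ^ (p ^ K * M) - 1 := by
  haveI : Fact p.Prime := ⟨hp⟩
  set N := p ^ (K + 1) with hN
  set y : ℤ := Q ^ (p ^ K * M) with hy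
  -- Q is a unit mod N
  have hQnA : ¬ p ∣ Q.natAbs := by
    intro hdvd
    exact hpQ (Int.natCast_dvd.mpr hdvd)
  have hcop : Nat.Coprime Q.natAbs N :=
    Nat.Coprime.pow_right _ (hp.coprime_iff_not_dvd.mpr hQnA).symm
  have hQunit : IsUnit ((Q : ZMod N)) := by
    have hu : IsUnit ((Q.natAbs : ZMod N)) := (ZMod.isUnit_iff_coprime _ _).mpr hcop
    rcases Int.natAbs_eq Q with he | he
    · rw [he, Int.cast_natCast]
      exact hu
    · rw [he, Int.cast_neg, Int.cast_natCast]
      exact hu.neg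
  -- Euler
  have heuler : ((Q : ZMod N)) ^ (Nat.totient N) = 1 := by
    have := ZMod.pow_totient hQunit.unit
    have h1 : ((hQunit.unit : (ZMod N)ˣ) : ZMod N) = (Q : ZMod N) := hQunit.unit_spec
    calc ((Q : ZMod N)) ^ (Nat.totient N) = ((hQunit.unit ^ (Nat.totient N) : (ZMod N)ˣ) : ZMod N) := by
          rw [Units.val_pow_eq_pow_val, h1]
      _ = 1 := by rw [this]; rfl
  have htot : Nat.totient N = (p ^ K * M) * 2 := by
    rw [hN, Nat.totient_prime_pow hp (Nat.succ_pos K)]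
    have : K + 1 - 1 = K := rfl
    rw [this]
    have : p - 1 = 2 * M := by omega
    rw [this]; ring
  have hy2 : ((N : ℤ)) ∣ y ^ 2 - 1 := by
    have : ((y ^ 2 - 1 : ℤ) : ZMod N) = 0 := by
      push_cast
      rw [hy]
      push_cast
      rw [← pow_mul, ← htot, heuler]
      ring
    exact_mod_cast (ZMod.intCast_zmod_eq_zero_iff_dvd _ _).mp this
  -- mod p : y ≡ 1
  have hP0 : ((P : ZMod p)) ≠ 0 := by
    rw [Ne, ZMod.intCast_zmod_eq_zero_iff_dvd]; exact hpP
  have h20 : ((2 : ZMod p)) ≠ 0 := by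
    intro hc
    have : ((2 : ℕ) : ZMod p) = 0 := by exact_mod_cast hc
    have := (ZMod.natCast_eq_zero_iff _ _).mp this
    exact hp2 ((Nat.prime_dvd_prime_iff_eq hp Nat.prime_two).mp this)
  have h4Q : ((4 : ZMod p)) * ((Q : ℤ) : ZMod p) = ((P : ℤ) : ZMod p) ^ 2 := by
    have h0 : (((P ^ 2 - 4 * Q : ℤ)) : ZMod p) = 0 :=
      (ZMod.intCast_zmod_eq_zero_iff_dvd _ _).mpr hsq
    push_cast at h0
    linear_combination -h0
  have hQM : ((Q : ℤ) : ZMod p) ^ M = 1 := by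
    have hPF : ((P : ℤ) : ZMod p) ^ (p - 1) = 1 := ZMod.pow_card_sub_one_eq_one hP0
    have h2F : ((2 : ZMod p)) ^ (p - 1) = 1 := ZMod.pow_card_sub_one_eq_one h20
    have h1 : (((4 : ZMod p)) * ((Q : ℤ) : ZMod p)) ^ M = 1 := by
      rw [h4Q, ← pow_mul, show 2 * M = p - 1 from by omega, hPF]
    have h4 : ((4 : ZMod p)) ^ M = 1 := by
      have : ((4 : ZMod p)) = 2 ^ 2 := by norm_num
      rw [this, ← pow_mul, show 2 * M = p - 1 from by omega, h2F]
    rw [mul_pow, h4, one_mul] at h1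
    exact h1
  have hy1modp : ((y : ℤ) : ZMod p) = 1 := by
    rw [hy]; push_cast
    rw [mul_comm (p ^ K) M, pow_mul, hQM, one_pow]
  have hymem : (p : ℤ) ∣ y - 1 := by
    have : (((y - 1 : ℤ)) : ZMod p) = 0 := by push_cast [hy1modp]; ring
    exact (ZMod.intCast_zmod_eq_zero_iff_dvd _ _).mp this
  -- p does not divide y + 1
  have hyp1 : ¬ (p : ℤ) ∣ y + 1 := by
    intro hdvd
    have h2d : (p : ℤ) ∣ 2 := by
      have := dvd_sub hdvd hymem
      simpa using this
    have : p ∣ 2 := by exact_mod_cast h2d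
    exact hp2 ((Nat.prime_dvd_prime_iff_eq hp Nat.prime_two).mp this)
  -- conclude
  have hprime : Prime ((p : ℕ) : ℤ) := Nat.prime_iff_prime_int.mp hp
  have hcop2 : IsCoprime ((p : ℤ) ^ (K + 1)) (y + 1) :=
    IsCoprime.pow_left ((hprime.coprime_iff_not_dvd).mpr hyp1)
  have hfac : (p : ℤ) ^ (K + 1) ∣ (y - 1) * (y + 1) := by
    have he : (y - 1) * (y + 1) = y ^ 2 - 1 := by ring
    rw [he]
    have : ((N : ℕ) : ℤ) = (p : ℤ) ^ (K + 1) := by rw [hN]; push_cast; ring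
    rw [← this]
    exact hy2
  exact hcop2.dvd_of_dvd_mul_right hfac

open ArithmeticFunction in
lemma mobiusDualU_prime_pow (P Q : ℤ) (p : ℕ) (hp : p.Prime) (K : ℕ) :
    mobiusDualU P Q (p ^ (K + 1))
      = (lucasU P Q (p ^ (K + 1)) : ℚ) * (lucasU P Q (p ^ K) : ℚ)⁻¹ := by
  unfold mobiusDualU
  rw [Nat.divisors_prime_pow hp, Finset.prod_map]
  simp only [Function.Embedding.coeFn_mk]
  rw [Finset.prod_range_succ, Finset.prod_range_succ]
  have h1 : ∀ i ∈ Finset.range K,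
      (lucasU P Q (p ^ i) : ℚ) ^ (moebius (p ^ (K + 1) / p ^ i)) = 1 := by
    intro i hi
    rw [Finset.mem_range] at hi
    have hdiv : p ^ (K + 1) / p ^ i = p ^ (K + 1 - i) :=
      Nat.pow_div (by omega) hp.pos
    rw [hdiv, moebius_apply_prime_pow hp (by omega), if_neg (by omega), zpow_zero]
  rw [Finset.prod_congr rfl h1, Finset.prod_const_one, one_mul]
  have e1 : p ^ (K + 1) / p ^ K = p ^ 1 := by
    rw [Nat.pow_div (by omega) hp.pos]
    congr 1
    omega
  have e2 : p ^ (K + 1) / p ^ (K + 1) = 1 :=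
    Nat.div_self (pow_pos hp.pos _)
  rw [e1, e2, pow_one, moebius_apply_prime hp, moebius_apply_one, zpow_one,
    zpow_neg_one]
  ring

theorem stmt_2 (P Q : ℤ) (hP : P ≠ 0) (hQ : Q ≠ 0) (hD : P ^ 2 - 4 * Q ≠ 0)
    (hnd : ∀ m : ℕ, 1 ≤ m → lucasU P Q m ≠ 0)
    (p : ℕ) (hp : p.Prime) (hodd : Odd p) (hpD : (p : ℤ) ∣ (P ^ 2 - 4 * Q))
    (hpPQ : ¬ p ∣ Int.gcd P Q)
    (k : ℕ) (hk : 1 ≤ k) (hk3 : p = 3 → 2 ≤ k) :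
    ∃ t : ℤ, mobiusDualU P Q (p ^ k) = (p : ℚ) + (p : ℚ) ^ (k + 1) * (t : ℚ) := by
  obtain ⟨K, rfl⟩ : ∃ K, k = K + 1 := ⟨k - 1, by omega⟩
  have hp2 : p ≠ 2 := by
    rintro rfl
    rcases hodd with ⟨j, hj⟩
    omega
  have hprime : Prime ((p : ℕ) : ℤ) := Nat.prime_iff_prime_int.mp hp
  have hpdvd2 : ¬ (p : ℤ) ∣ 2 := by
    intro h
    have : p ∣ 2 := by exact_mod_cast h
    exact hp2 ((Nat.prime_dvd_prime_iff_eq hp Nat.prime_two).mp this)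
  have hp4 : ¬ (p : ℤ) ∣ 4 := by
    intro hd
    exact hpdvd2 (hprime.dvd_of_dvd_pow (show (p:ℤ) ∣ 2^2 by norm_num [hd]))
  have hpP : ¬ (p : ℤ) ∣ P := by
    intro hdP
    have hdQ : (p : ℤ) ∣ Q := by
      have h4Q : (p : ℤ) ∣ 4 * Q := by
        have he : (4 * Q : ℤ) = P * P - (P ^ 2 - 4 * Q) := by ring
        rw [he]
        exact dvd_sub (Dvd.dvd.mul_right hdP P) hpD
      rcases hprime.dvd_mul.mp h4Q with h | h
      · exact absurd h hp4
      · exact h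
    apply hpPQ
    have : (p : ℤ) ∣ (Int.gcd P Q : ℤ) := Int.dvd_coe_gcd hdP hdQ
    exact_mod_cast this
  have hpQ : ¬ (p : ℤ) ∣ Q := by
    intro hdQ
    apply hpP
    apply hprime.dvd_of_dvd_pow (n := 2)
    have he : (P ^ 2 : ℤ) = (P ^ 2 - 4 * Q) + 4 * Q := by ring
    rw [he]
    exact dvd_add hpD (Dvd.dvd.mul_left hdQ 4)
  obtain ⟨M, hM⟩ : ∃ M, p = 2 * M + 1 := hodd
  obtain ⟨m, hm⟩ : ∃ m, p ^ K = m + 1 := ⟨p ^ K - 1, by have := pow_pos hp.pos K; omega⟩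
  -- multiplicativity
  have hUmul : lucasU P Q (p ^ (K + 1))
      = lucasU P Q (p ^ K) * lucasU (lucasV P Q (p ^ K)) (Q ^ (p ^ K)) p := by
    have h1 := (lucasU_mul P Q m p).1
    rw [← hm] at h1
    rw [pow_succ]
    exact h1
  -- discriminant of the inner sequence
  have hD' : (lucasV P Q (p ^ K)) ^ 2 - 4 * (Q ^ (p ^ K))
      = (P ^ 2 - 4 * Q) * lucasU P Q (p ^ K) ^ 2 := by
    linear_combination lucasV_sq P Q (p ^ K)
  have hdvdU : (p : ℤ) ^ K ∣ lucasU P Q (p ^ K) := pow_dvd_lucasU P Q p hp hp2 hpD K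
  have hD'dvd : (p : ℤ) ^ (2 * K + 1) ∣ (lucasV P Q (p ^ K)) ^ 2 - 4 * (Q ^ (p ^ K)) := by
    rw [hD']
    have h1 : (p : ℤ) ^ (K + K) ∣ lucasU P Q (p ^ K) ^ 2 := by
      rw [pow_add, sq]
      exact mul_dvd_mul hdvdU hdvdU
    have h2 := mul_dvd_mul hpD h1
    rw [show 2 * K + 1 = 1 + (K + K) from by omega, pow_add, pow_one]
    exact h2
  -- main congruence (†)
  have hmain : (p : ℤ) ^ (K + 2) ∣
      2 ^ (2 * M) * lucasU (lucasV P Q (p ^ K)) (Q ^ (p ^ K)) p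
        - (p : ℤ) * (lucasV P Q (p ^ K)) ^ (2 * M) := by
    rcases Nat.eq_zero_or_pos K with hK0 | hKpos
    · subst hK0
      have hp5 : 5 ≤ p := by
        have hp3 : p ≠ 3 := fun h => by have := hk3 h; omega
        have h0 := hp.two_le
        rcases Nat.lt_or_ge p 5 with hlt | hge
        · exfalso
          interval_cases p
          · exact hp2 rfl
          · exact hp3 rfl
          · norm_num at hp
        · exact hge
      have hV1 : lucasV P Q (p ^ 0) = P := by
        rw [pow_zero]
        unfold lucasV
        rw [show (1:ℕ) + 1 = 2 from rfl, lucasU_add_two]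
        simp [lucasU]
        ring
      have hQ1 : Q ^ (p ^ 0) = Q := by rw [pow_zero, pow_one]
      rw [hV1, hQ1]
      obtain ⟨r, hr⟩ : ∃ r, p = r + 5 := ⟨p - 5, by omega⟩
      subst hr
      obtain ⟨f, hf⟩ := closed5 P Q r
      obtain ⟨c, hc⟩ : ((r + 5) : ℤ) ∣ (((r + 5).choose 3 : ℕ) : ℤ) := by
        have h1 : (r + 5) ∣ (r + 5).choose 3 :=
          Nat.Prime.dvd_choose_self hp (by norm_num) (by omega)
        exact_mod_cast h1
      obtain ⟨d, hd⟩ := hpD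
      have hdz : P ^ 2 - 4 * Q = ((r : ℤ) + 5) * d := by push_cast at hd ⊢; linarith [hd]
      refine ⟨c * d * P ^ (r + 2) + d ^ 2 * f, ?_⟩
      have h2M : 2 * M = r + 4 := by omega
      rw [h2M]
      push_cast at hc ⊢
      linear_combination hf + (P ^ (r + 2) * (P ^ 2 - 4 * Q)) * hc
        + (P ^ (r + 2) * ((r : ℤ) + 5) * c + f * ((P ^ 2 - 4 * Q) + ((r : ℤ) + 5) * d)) * hdz
    · have hle : K + 2 ≤ 2 * K + 1 := by omega
      have hd1 : (p : ℤ) ^ (K + 2) ∣ (lucasV P Q (p ^ K)) ^ 2 - 4 * (Q ^ (p ^ K)) :=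
        dvd_trans (pow_dvd_pow _ hle) hD'dvd
      have h2 := two_pow_mul_lucasU (lucasV P Q (p ^ K)) (Q ^ (p ^ K)) (2 * M)
      rw [show 2 * M + 1 = p from by omega] at h2
      have hcast : ((2 * M : ℕ) : ℤ) + 1 = (p : ℤ) := by push_cast; omega
      rw [hcast] at h2
      exact dvd_trans hd1 h2
  -- (‡)
  have hsec : (p : ℤ) ^ (K + 2) ∣
      (p : ℤ) * (lucasV P Q (p ^ K)) ^ (2 * M)
        - (p : ℤ) * 2 ^ (2 * M) * Q ^ (p ^ K * M) := by
    have hgeom : ((lucasV P Q (p ^ K)) ^ 2 - 4 * (Q ^ (p ^ K)))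
        ∣ ((lucasV P Q (p ^ K)) ^ 2) ^ M - (4 * (Q ^ (p ^ K))) ^ M :=
      sub_dvd_pow_sub_pow _ _ M
    have hKd : (p : ℤ) ^ (K + 1) ∣ (lucasV P Q (p ^ K)) ^ 2 - 4 * (Q ^ (p ^ K)) :=
      dvd_trans (pow_dvd_pow _ (by omega)) hD'dvd
    obtain ⟨w, hw⟩ := dvd_trans hKd hgeom
    refine ⟨w, ?_⟩
    have e2 : ((4 : ℤ) * (Q ^ (p ^ K))) ^ M = 2 ^ (2 * M) * Q ^ (p ^ K * M) := by
      rw [mul_pow, ← pow_mul, show (4:ℤ) = 2 ^ 2 from by norm_num, ← pow_mul]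
    linear_combination (p : ℤ) * hw + (p : ℤ) * e2
  -- (§)
  have hqr := qr_pow p hp hp2 P Q hpP hpQ hpD K M hM
  have hthird : (p : ℤ) ^ (K + 2) ∣
      (p : ℤ) * 2 ^ (2 * M) * (Q ^ (p ^ K * M) - 1) := by
    obtain ⟨w, hw⟩ := hqr
    exact ⟨2 ^ (2 * M) * w, by linear_combination ((p : ℤ) * 2 ^ (2 * M)) * hw⟩
  -- combine
  have hfin : (p : ℤ) ^ (K + 2) ∣
      2 ^ (2 * M) * (lucasU (lucasV P Q (p ^ K)) (Q ^ (p ^ K)) p - (p : ℤ)) := by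
    obtain ⟨a, ha⟩ := hmain
    obtain ⟨b, hb⟩ := hsec
    obtain ⟨c, hc⟩ := hthird
    exact ⟨a + b + c, by linear_combination ha + hb + hc⟩
  have hcop : IsCoprime ((p : ℤ) ^ (K + 2)) ((2 : ℤ) ^ (2 * M)) := by
    apply IsCoprime.pow
    have hnc : Nat.Coprime p 2 := (Nat.coprime_primes hp Nat.prime_two).mpr hp2
    have := Nat.isCoprime_iff_coprime.mpr hnc
    exact_mod_cast this
  have hfin2 : (p : ℤ) ^ (K + 2) ∣
      lucasU (lucasV P Q (p ^ K)) (Q ^ (p ^ K)) p - (p : ℤ) :=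
    hcop.dvd_of_dvd_mul_left hfin
  obtain ⟨t, ht⟩ := hfin2
  refine ⟨t, ?_⟩
  have hMD := mobiusDualU_prime_pow P Q p hp K
  have hUne : (lucasU P Q (p ^ K) : ℚ) ≠ 0 := by
    have := hnd (p ^ K) (by have := pow_pos hp.pos K; omega)
    exact_mod_cast this
  rw [hMD, hUmul]
  have hUt : (lucasU (lucasV P Q (p ^ K)) (Q ^ (p ^ K)) p : ℚ)
      = (p : ℚ) + (p : ℚ) ^ (K + 2) * (t : ℚ) := by
    have h1 : lucasU (lucasV P Q (p ^ K)) (Q ^ (p ^ K)) p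
        = (p : ℤ) + (p : ℤ) ^ (K + 2) * t := by linarith [ht]
    exact_mod_cast h1
  push_cast
  rw [hUt]
  field_simp
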